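/- arXiv:2203.15031 — 3 statements merged into one kernel-verified Lean document; each statement's English description precedes it below -/
import Mathlib

section
/- The scaled Lasso objective L(β, σ) = ‖y − Xβ‖₂²/(2nσ) + σ/2 + λ₀‖β‖₁ is jointly convex in (β, σ); that is, L is convex on the convex set ℝᵖ × (0, ∞). -/
/-- Quadratic-over-linear scalar inequality (convexity of `u²/σ` jointly). -/
lemma quad_over_lin (u v σ τ a b : ℝ) (hσ : 0 < σ) (hτ : 0 < τ)
    (ha : 0 ≤ a) (hb : 0 ≤ b) (hab : a + b = 1) :
    (a * u + b * v) ^ 2 / (a * σ + b * τ) ≤ a * (u ^ 2 / σ) + b * (v ^ 2 / τ) := by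
  have h : 0 < a * σ + b * τ := by
    rcases eq_or_lt_of_le ha with h' | h'
    · have : b = 1 := by linarith
      simp [← h', this, hτ]
    · have : 0 < a * σ := mul_pos h' hσ
      nlinarith [mul_nonneg hb hτ.le]
  rw [div_le_iff₀ h]
  have e1 : a * (u ^ 2 / σ) + b * (v ^ 2 / τ) = (a * u ^ 2 * τ + b * v ^ 2 * σ) / (σ * τ) := by
    field_simp
  rw [e1, div_mul_eq_mul_div, le_div_iff₀ (mul_pos hσ hτ)]
  nlinarith [sq_nonneg (τ * u - σ * v), mul_nonneg ha hb, mul_nonneg (mul_nonneg ha hb) (sq_nonneg (τ * u - σ * v))]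

/-- The scaled Lasso objective
`L(β, σ) = ‖y − Xβ‖₂²/(2nσ) + σ/2 + λ₀‖β‖₁`
is jointly convex in `(β, σ)` on the convex set `ℝᵖ × (0, ∞)`. -/
theorem scaledLasso_jointly_convex (n p : ℕ) (hn : 0 < n)
    (y : Fin n → ℝ) (X : Matrix (Fin n) (Fin p) ℝ) (lam0 : ℝ) (hlam0 : 0 ≤ lam0) :
    ConvexOn ℝ {q : (Fin p → ℝ) × ℝ | 0 < q.2}
      (fun q : (Fin p → ℝ) × ℝ =>
        (∑ i, (y i - X.mulVec q.1 i) ^ 2) / (2 * (n : ℝ) * q.2) + q.2 / 2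
          + lam0 * ∑ j, |q.1 j|) := by
  constructor
  · -- convexity of the set
    intro x hx z hz a b ha hb hab
    simp only [Set.mem_setOf_eq] at *
    rcases eq_or_lt_of_le ha with h' | h'
    · have : b = 1 := by linarith
      simpa [← h', this] using hz
    · have : 0 < a * x.2 := mul_pos h' hx
      have : 0 ≤ b * z.2 := mul_nonneg hb hz.le
      simp only [Prod.snd_add, Prod.smul_snd, smul_eq_mul]
      linarith
  intro x hx z hz a b ha hb hab
  simp only [Set.mem_setOf_eq] at hx hz
  have hσab : 0 < a * x.2 + b * z.2 := by
    rcases eq_or_lt_of_le ha with h' | h'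
    · have : b = 1 := by linarith
      simp [← h', this, hz]
    · have h1 : 0 < a * x.2 := mul_pos h' hx
      have h2 : 0 ≤ b * z.2 := mul_nonneg hb hz.le
      linarith
  have h2n : (0:ℝ) < 2 * n := by positivity
  set r : Fin n → ℝ := fun i => y i - X.mulVec x.1 i with hr
  set s : Fin n → ℝ := fun i => y i - X.mulVec z.1 i with hs
  have hres : ∀ i, y i - X.mulVec (a • x.1 + b • z.1) i = a * r i + b * s i := by
    intro i
    simp only [hr, hs, Matrix.mulVec_add, Matrix.mulVec_smul, Pi.add_apply, Pi.smul_apply,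
      smul_eq_mul]
    linear_combination (y i) * hab.symm
  -- key sum inequality per coordinate
  have hsum : ∑ i, (a * r i + b * s i) ^ 2 / (a * x.2 + b * z.2)
      ≤ ∑ i, (a * (r i ^ 2 / x.2) + b * (s i ^ 2 / z.2)) :=
    Finset.sum_le_sum fun i _ => quad_over_lin _ _ _ _ _ _ hx hz ha hb hab
  have h1 : (∑ i, (a * r i + b * s i) ^ 2) / (2 * (n:ℝ) * (a * x.2 + b * z.2))
      ≤ a * ((∑ i, r i ^ 2) / (2 * (n:ℝ) * x.2)) + b * ((∑ i, s i ^ 2) / (2 * (n:ℝ) * z.2)) := by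
    have e1 : (∑ i, (a * r i + b * s i) ^ 2) / (2 * (n:ℝ) * (a * x.2 + b * z.2))
        = (∑ i, (a * r i + b * s i) ^ 2 / (a * x.2 + b * z.2)) / (2 * (n:ℝ)) := by
      rw [← Finset.sum_div, div_div, mul_comm (2 * (n:ℝ)) (a * x.2 + b * z.2)]
    have e2 : a * ((∑ i, r i ^ 2) / (2 * (n:ℝ) * x.2))
          + b * ((∑ i, s i ^ 2) / (2 * (n:ℝ) * z.2))
        = (∑ i, (a * (r i ^ 2 / x.2) + b * (s i ^ 2 / z.2))) / (2 * (n:ℝ)) := by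
      rw [Finset.sum_add_distrib, ← Finset.mul_sum, ← Finset.mul_sum,
        ← Finset.sum_div, ← Finset.sum_div]
      field_simp
    rw [e1, e2]
    gcongr
  have h2 : ∑ j, |a * x.1 j + b * z.1 j| ≤ a * ∑ j, |x.1 j| + b * ∑ j, |z.1 j| := by
    calc ∑ j, |a * x.1 j + b * z.1 j| ≤ ∑ j, (|a * x.1 j| + |b * z.1 j|) :=
          Finset.sum_le_sum fun j _ => abs_add_le _ _
      _ = a * ∑ j, |x.1 j| + b * ∑ j, |z.1 j| := by
          rw [Finset.sum_add_distrib, Finset.mul_sum, Finset.mul_sum]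
          congr 1 <;> refine Finset.sum_congr rfl fun j _ => ?_
          · rw [abs_mul, abs_of_nonneg ha]
          · rw [abs_mul, abs_of_nonneg hb]
  have h2' : lam0 * ∑ j, |a * x.1 j + b * z.1 j|
      ≤ lam0 * (a * ∑ j, |x.1 j| + b * ∑ j, |z.1 j|) :=
    mul_le_mul_of_nonneg_left h2 hlam0
  simp only [Prod.fst_add, Prod.snd_add, Prod.smul_fst, Prod.smul_snd, smul_eq_mul,
    Pi.add_apply, Pi.smul_apply]
  have hres' : ∑ i, (y i - X.mulVec (a • x.1 + b • z.1) i) ^ 2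
      = ∑ i, (a * r i + b * s i) ^ 2 :=
    Finset.sum_congr rfl fun i _ => by rw [hres i]
  calc (∑ i, (y i - X.mulVec (a • x.1 + b • z.1) i) ^ 2) / (2 * (n:ℝ) * (a * x.2 + b * z.2))
        + (a * x.2 + b * z.2) / 2 + lam0 * ∑ j, |a * x.1 j + b * z.1 j|
      ≤ (a * ((∑ i, r i ^ 2) / (2 * (n:ℝ) * x.2)) + b * ((∑ i, s i ^ 2) / (2 * (n:ℝ) * z.2)))
        + (a * x.2 + b * z.2) / 2 + lam0 * (a * ∑ j, |x.1 j| + b * ∑ j, |z.1 j|) := by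
        rw [hres']
        exact add_le_add (add_le_add h1 le_rfl) h2'
    _ = a * ((∑ i, r i ^ 2) / (2 * (n:ℝ) * x.2) + x.2 / 2 + lam0 * ∑ j, |x.1 j|)
        + b * ((∑ i, s i ^ 2) / (2 * (n:ℝ) * z.2) + z.2 / 2 + lam0 * ∑ j, |z.1 j|) := by ring
end

section
/- Scale invariance of the SPMESL estimator (Proposition 1, minimizer form): let X be an n×p real matrix with columns x₁,…,x_p, let s₁₁,…,s_pp > 0, let X̃ = XC with C = diag(s₁₁^{−1/2},…,s_pp^{−1/2}) (so x̃ⱼ = xⱼ/√sⱼⱼ), fix an index k and λ₀ ≥ 0. Define F^C(b, σ) = ‖x̃ₖ − Σ_{j≠k} bⱼ x̃ⱼ‖₂²/(2nσ) + σ/2 + λ₀ Σ_{j≠k} |bⱼ| and F^o(b, σ) = ‖xₖ − Σ_{j≠k} bⱼ xⱼ‖₂²/(2nσ) + σ/2 + λ₀ Σ_{j≠k} √sⱼⱼ |bⱼ|, both over the set {b ∈ ℝᵖ : bₖ = −1} × (0, ∞). Then (b, σ) minimizes F^C if and only if (b°, σ°) minimizes F^o, where b°ⱼ = √(sₖₖ/sⱼⱼ)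 · bⱼ for every j and σ° = √sₖₖ · σ; consequently the associated precision-matrix entries satisfy −b°ⱼ/(σ°)² = (sⱼⱼ sₖₖ)^{−1/2} · (−bⱼ/σ²) for all j, i.e., Ω̂° = C Ω̂^C C entrywise in column k. -/
/-- The scaled Lasso objective for column `k` with the scaled design `X̃ = XC`,
`C = diag(s₁₁^{−1/2},…,s_pp^{−1/2})`. -/
noncomputable def spmeslObjScaled (n p : ℕ) (X : Matrix (Fin n) (Fin p) ℝ)
    (s : Fin p → ℝ) (k : Fin p) (lam0 : ℝ) (b : Fin p → ℝ) (σ : ℝ) : ℝ :=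
  (∑ i, (X i k / Real.sqrt (s k)
      - ∑ j ∈ Finset.univ.erase k, b j * (X i j / Real.sqrt (s j))) ^ 2) / (2 * (n : ℝ) * σ)
    + σ / 2 + lam0 * ∑ j ∈ Finset.univ.erase k, |b j|

/-- The scaled Lasso objective for column `k` with the original design `X` and the
weighted penalty `λ₀ Σ_{j≠k} √sⱼⱼ |bⱼ|`. -/
noncomputable def spmeslObjOrig (n p : ℕ) (X : Matrix (Fin n) (Fin p) ℝ)
    (s : Fin p → ℝ) (k : Fin p) (lam0 : ℝ) (b : Fin p → ℝ) (σ : ℝ) : ℝ :=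
  (∑ i, (X i k - ∑ j ∈ Finset.univ.erase k, b j * X i j) ^ 2) / (2 * (n : ℝ) * σ)
    + σ / 2 + lam0 * ∑ j ∈ Finset.univ.erase k, Real.sqrt (s j) * |b j|

section Aux
variable (n p : ℕ) (X : Matrix (Fin n) (Fin p) ℝ) (s : Fin p → ℝ) (k : Fin p) (lam0 : ℝ)

lemma spmesl_key (hn : 0 < n) (hs : ∀ j, 0 < s j) (b : Fin p → ℝ) (σ : ℝ) :
    spmeslObjOrig n p X s k lam0 (fun j => Real.sqrt (s k / s j) * b j)
        (Real.sqrt (s k) * σ)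
      = Real.sqrt (s k) * spmeslObjScaled n p X s k lam0 b σ := by
  have hsk : 0 < Real.sqrt (s k) := Real.sqrt_pos.2 (hs k)
  unfold spmeslObjOrig spmeslObjScaled
  have h1 : ∀ i, X i k - ∑ j ∈ Finset.univ.erase k, (Real.sqrt (s k / s j) * b j) * X i j
      = Real.sqrt (s k) * (X i k / Real.sqrt (s k)
        - ∑ j ∈ Finset.univ.erase k, b j * (X i j / Real.sqrt (s j))) := by
    intro i
    rw [mul_sub, Finset.mul_sum, mul_div_cancel₀ _ hsk.ne']
    congr 1
    refine Finset.sum_congr rfl fun j _ => ?_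
    have hsj : 0 < Real.sqrt (s j) := Real.sqrt_pos.2 (hs j)
    rw [Real.sqrt_div (hs k).le]
    field_simp
  have h2 : (∑ i, (X i k
      - ∑ j ∈ Finset.univ.erase k, (Real.sqrt (s k / s j) * b j) * X i j) ^ 2)
      = s k * ∑ i, (X i k / Real.sqrt (s k)
        - ∑ j ∈ Finset.univ.erase k, b j * (X i j / Real.sqrt (s j))) ^ 2 := by
    rw [Finset.mul_sum]
    refine Finset.sum_congr rfl fun i _ => ?_
    rw [h1, mul_pow, Real.sq_sqrt (hs k).le]
  have h3 : (∑ j ∈ Finset.univ.erase k, Real.sqrt (s j) * |Real.sqrt (s k / s j) * b j|)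
      = Real.sqrt (s k) * ∑ j ∈ Finset.univ.erase k, |b j| := by
    rw [Finset.mul_sum]
    refine Finset.sum_congr rfl fun j _ => ?_
    have hsj : 0 < Real.sqrt (s j) := Real.sqrt_pos.2 (hs j)
    rw [abs_mul, abs_of_nonneg (Real.sqrt_nonneg _), Real.sqrt_div (hs k).le]
    field_simp
  rw [h2, h3]
  set a := Real.sqrt (s k) with ha
  have haa : a * a = s k := Real.mul_self_sqrt (hs k).le
  rw [← haa]
  by_cases hσ : σ = 0
  · simp [hσ]
    ring
  · have hn' : (n : ℝ) ≠ 0 := by positivity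
    field_simp

lemma spmesl_comp (hs : ∀ j, 0 < s j) (b' : Fin p → ℝ) :
    (fun j => Real.sqrt (s k / s j) * (Real.sqrt (s j / s k) * b' j)) = b' := by
  funext j
  rw [← mul_assoc, ← Real.sqrt_mul (div_nonneg (hs k).le (hs j).le)]
  rw [div_mul_div_comm, mul_comm (s k) (s j), div_self (mul_pos (hs j) (hs k)).ne', Real.sqrt_one, one_mul]

end Aux

/-- Scale invariance of the SPMESL estimator (Proposition 1, minimizer form):
`(b, σ)` minimizes the scaled-design objective iff `(b°, σ°)` with
`b°ⱼ = √(sₖₖ/sⱼⱼ)·bⱼ` and `σ° = √sₖₖ·σ` minimizes the original-design objective;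
consequently `−b°ⱼ/(σ°)² = (sⱼⱼsₖₖ)^{−1/2}·(−bⱼ/σ²)` for all `j`. -/
theorem spmesl_scale_invariance (n p : ℕ) (hn : 0 < n)
    (X : Matrix (Fin n) (Fin p) ℝ) (s : Fin p → ℝ) (hs : ∀ j, 0 < s j)
    (k : Fin p) (lam0 : ℝ) (hlam0 : 0 ≤ lam0) (b : Fin p → ℝ) (σ : ℝ) :
    ((b k = -1 ∧ 0 < σ ∧
        ∀ (b' : Fin p → ℝ) (σ' : ℝ), b' k = -1 → 0 < σ' →
          spmeslObjScaled n p X s k lam0 b σ ≤ spmeslObjScaled n p X s k lam0 b' σ') ↔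
      ((fun j => Real.sqrt (s k / s j) * b j) k = -1 ∧ 0 < Real.sqrt (s k) * σ ∧
        ∀ (b' : Fin p → ℝ) (σ' : ℝ), b' k = -1 → 0 < σ' →
          spmeslObjOrig n p X s k lam0 (fun j => Real.sqrt (s k / s j) * b j)
              (Real.sqrt (s k) * σ)
            ≤ spmeslObjOrig n p X s k lam0 b' σ')) ∧
    (0 < σ → ∀ j : Fin p,
      -(Real.sqrt (s k / s j) * b j) / (Real.sqrt (s k) * σ) ^ 2
        = (1 / Real.sqrt (s j * s k)) * (-(b j) / σ ^ 2)) := by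
  have hsk : 0 < Real.sqrt (s k) := Real.sqrt_pos.2 (hs k)
  have hkk : Real.sqrt (s k / s k) = 1 := by
    rw [div_self (hs k).ne', Real.sqrt_one]
  constructor
  · constructor
    · rintro ⟨hbk, hσ, hmin⟩
      refine ⟨by simp [hkk, hbk], mul_pos hsk hσ, fun b' σ' hb'k hσ' => ?_⟩
      have hσ'' : 0 < σ' / Real.sqrt (s k) := div_pos hσ' hsk
      have hle := hmin (fun j => Real.sqrt (s j / s k) * b' j) (σ' / Real.sqrt (s k))
        (by simp [hkk, hb'k]) hσ''
      have e1 := spmesl_key n p X s k lam0 hn hs b σ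
      have e2 := spmesl_key n p X s k lam0 hn hs (fun j => Real.sqrt (s j / s k) * b' j)
        (σ' / Real.sqrt (s k))
      have hcan : Real.sqrt (s k) * (σ' / Real.sqrt (s k)) = σ' := by
        field_simp
      rw [spmesl_comp p s k hs b', hcan] at e2
      calc spmeslObjOrig n p X s k lam0 (fun j => Real.sqrt (s k / s j) * b j)
            (Real.sqrt (s k) * σ)
          = Real.sqrt (s k) * spmeslObjScaled n p X s k lam0 b σ := e1
        _ ≤ Real.sqrt (s k) * spmeslObjScaled n p X s k lam0
              (fun j => Real.sqrt (s j / s k) * b' j) (σ' / Real.sqrt (s k)) :=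
            mul_le_mul_of_nonneg_left hle hsk.le
        _ = spmeslObjOrig n p X s k lam0 b' σ' := e2.symm
    · rintro ⟨hbk, hσ, hmin⟩
      have hσ0 : 0 < σ := by nlinarith
      have hbk' : b k = -1 := by
        have h : Real.sqrt (s k / s k) * b k = -1 := hbk
        rwa [hkk, one_mul] at h
      refine ⟨hbk', hσ0, fun b' σ' hb'k hσ' => ?_⟩
      have e1 := spmesl_key n p X s k lam0 hn hs b σ
      have e2 := spmesl_key n p X s k lam0 hn hs b' σ'
      have h := hmin (fun j => Real.sqrt (s k / s j) * b' j) (Real.sqrt (s k) * σ')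
        (by simp [hkk, hb'k]) (mul_pos hsk hσ')
      rw [e1, e2] at h
      exact le_of_mul_le_mul_left h hsk
  · intro hσ j
    have hsj : 0 < Real.sqrt (s j) := Real.sqrt_pos.2 (hs j)
    rw [Real.sqrt_div (hs k).le, Real.sqrt_mul (hs j).le, mul_pow,
      Real.sq_sqrt (hs k).le]
    have h : s k = Real.sqrt (s k) * Real.sqrt (s k) := (Real.mul_self_sqrt (hs k).le).symm
    rw [h]
    field_simp
    simp only [Real.sqrt_sq hsk.le, Real.sqrt_mul_self hsk.le]
end

section
/- Row-wise parallel coordinate update (Proposition 2): let X be an n×p real matrix whose columns satisfy xⱼᵀxⱼ = n, let λ₁,…,λ_p ≥ 0, let B be a p×p real matrix with zero diagonal, and let E = X − XB be the current residual matrix with columns eₖ = xₖ − Xbₖ. Fix a row index j and define a ∈ ℝᵖ by a = xⱼᵀE/n + B_{j·} (so its k-th entry is aₖ = xⱼᵀeₖ/n + Bⱼₖ), set aⱼ = 0, and define B' to agree with B except that B'ⱼₖ = Soft_{λₖ}(aₖ) for k ≠ j and B'ⱼⱼ = 0. Then: (i) for every k ≠ j, B'ⱼₖ is the unique minimizer over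 t ∈ ℝ of t ↦ (1/(2n))‖xₖ − Σ_{l≠j} x_l Bₗₖ − xⱼ t‖₂² + λₖ|t|, i.e., the row update performs simultaneously the single-coordinate cyclic CD update at coordinate j for all p column problems; and (ii) the updated residual satisfies E + xⱼ(B_{j·} − B'_{j·}) = X − XB'. -/
/-- The soft-thresholding operator `Soft_λ(a) = sign(a)·(|a| − λ)₊`. -/
noncomputable def softThreshold (lam a : ℝ) : ℝ :=
  Real.sign a * max (|a| - lam) 0

lemma soft_strict_min (lam c : ℝ) (hlam : 0 ≤ lam) (t : ℝ)
    (ht : t ≠ softThreshold lam c) :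
    (1/2)*(softThreshold lam c - c)^2 + lam*|softThreshold lam c|
      < (1/2)*(t - c)^2 + lam*|t| := by
  rcases le_or_gt (|c|) lam with h | h
  · have hs : softThreshold lam c = 0 := by
      unfold softThreshold
      rw [max_eq_right (by linarith)]
      ring
    rw [hs] at ht ⊢
    have ht2 : 0 < t^2 := by positivity
    have h1 : c*t ≤ lam * |t| := by
      refine le_trans (le_abs_self _) ?_
      rw [abs_mul]
      exact mul_le_mul_of_nonneg_right h (abs_nonneg t)
    simp only [abs_zero]
    nlinarith
  · rcases lt_trichotomy c 0 with hc | hc | hc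
    · have habs : |c| = -c := abs_of_neg hc
      have hs : softThreshold lam c = c + lam := by
        unfold softThreshold
        rw [Real.sign_of_neg hc, habs, max_eq_left (by linarith [habs ▸ h])]
        ring
      rw [hs] at ht ⊢
      have h2 : 0 < (t - (c+lam))^2 := by
        have : t - (c+lam) ≠ 0 := sub_ne_zero.2 ht
        positivity
      have h3 : -t ≤ |t| := neg_le_abs t
      have h4 : |c + lam| = -(c+lam) := abs_of_neg (by rw [habs] at h; linarith)
      rw [h4]; nlinarith
    · exfalso; rw [hc, abs_zero] at h; linarith
    · have habs : |c| = c := abs_of_pos hc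
      have hs : softThreshold lam c = c - lam := by
        unfold softThreshold
        rw [Real.sign_of_pos hc, habs, max_eq_left (by rw [habs] at h; linarith)]
        ring
      rw [hs] at ht ⊢
      have h2 : 0 < (t - (c-lam))^2 := by
        have : t - (c-lam) ≠ 0 := sub_ne_zero.2 ht
        positivity
      have h3 : t ≤ |t| := le_abs_self t
      have h4 : |c - lam| = c - lam := abs_of_pos (by rw [habs] at h; linarith)
      rw [h4]; nlinarith

/-- Row-wise parallel coordinate update (Proposition 2): with `aₖ = xⱼᵀeₖ/n + Bⱼₖ`,
`aⱼ = 0`, and `B'` equal to `B` except `B'ⱼₖ = Soft_{λₖ}(aₖ)` for `k ≠ j`, `B'ⱼⱼ = 0`: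
(i) for every `k ≠ j`, `B'ⱼₖ` is the unique minimizer of the single-coordinate Lasso
subproblem at coordinate `j` for column `k`; and (ii) the updated residual satisfies
`E + xⱼ(B_{j·} − B'_{j·}) = X − XB'`. -/
theorem rowwise_parallel_cd_update (n p : ℕ) (hn : 0 < n)
    (X : Matrix (Fin n) (Fin p) ℝ) (hX : ∀ j : Fin p, ∑ i, (X i j) ^ 2 = (n : ℝ))
    (lam : Fin p → ℝ) (hlam : ∀ k, 0 ≤ lam k)
    (B : Matrix (Fin p) (Fin p) ℝ) (hB : ∀ k, B k k = 0) (j : Fin p)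
    (a : Fin p → ℝ)
    (ha : ∀ k : Fin p, k ≠ j →
      a k = (∑ i, X i j * (X i k - (X * B) i k)) / (n : ℝ) + B j k)
    (haj : a j = 0)
    (B' : Matrix (Fin p) (Fin p) ℝ)
    (hB'j : ∀ k : Fin p, B' j k = if k = j then 0 else softThreshold (lam k) (a k))
    (hB'rows : ∀ l : Fin p, l ≠ j → ∀ k : Fin p, B' l k = B l k) :
    (∀ k : Fin p, k ≠ j → ∀ t : ℝ, t ≠ B' j k →
      (1 / (2 * (n : ℝ))) * ∑ i,
          (X i k - (∑ l ∈ Finset.univ.erase j, X i l * B l k) - X i j * B' j k) ^ 2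
        + lam k * |B' j k|
      < (1 / (2 * (n : ℝ))) * ∑ i,
          (X i k - (∑ l ∈ Finset.univ.erase j, X i l * B l k) - X i j * t) ^ 2
        + lam k * |t|) ∧
    (X - X * B) + Matrix.vecMulVec (fun i => X i j) (fun k => B j k - B' j k)
      = X - X * B' := by
  have hn' : (0:ℝ) < (n:ℝ) := Nat.cast_pos.2 hn
  constructor
  · intro k hk t ht
    have hXB : ∀ i, (X * B) i k
        = (∑ l ∈ Finset.univ.erase j, X i l * B l k) + X i j * B j k := by
      intro i
      rw [Matrix.mul_apply, ← Finset.sum_erase_add _ _ (Finset.mem_univ j)]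
    have hak : (n:ℝ) * a k
        = ∑ i, X i j * (X i k - ∑ l ∈ Finset.univ.erase j, X i l * B l k) := by
      have h2 : ∑ i, X i j * (X i k - (X*B) i k)
          = ∑ i, X i j * (X i k - ∑ l ∈ Finset.univ.erase j, X i l * B l k)
            - (B j k) * ∑ i, (X i j)^2 := by
        rw [Finset.mul_sum, ← Finset.sum_sub_distrib]
        exact Finset.sum_congr rfl fun i _ => by rw [hXB i]; ring
      rw [ha k hk, h2, hX j]
      field_simp
      ring
    have expand : ∀ s : ℝ,
        ∑ i, (X i k - (∑ l ∈ Finset.univ.erase j, X i l * B l k) - X i j * s)^2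
        = (∑ i, (X i k - ∑ l ∈ Finset.univ.erase j, X i l * B l k)^2)
          - 2*s*((n:ℝ) * a k) + (n:ℝ)*s^2 := by
      intro s
      rw [hak, ← hX j, Finset.mul_sum, Finset.sum_mul, ← Finset.sum_sub_distrib,
        ← Finset.sum_add_distrib]
      exact Finset.sum_congr rfl fun i _ => by ring
    have hBjk : B' j k = softThreshold (lam k) (a k) := by
      rw [hB'j k, if_neg hk]
    have key := soft_strict_min (lam k) (a k) (hlam k) t (hBjk ▸ ht)
    rw [hBjk] at *
    rw [expand t, expand (softThreshold (lam k) (a k))]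
    have e : ∀ s : ℝ, (1 / (2*(n:ℝ))) *
        ((∑ i, (X i k - ∑ l ∈ Finset.univ.erase j, X i l * B l k)^2)
          - 2*s*((n:ℝ) * a k) + (n:ℝ)*s^2)
        = (∑ i, (X i k - ∑ l ∈ Finset.univ.erase j, X i l * B l k)^2)/(2*(n:ℝ))
          - (a k)^2/2 + (1/2)*(s - a k)^2 := by
      intro s
      field_simp
      ring
    rw [e, e]
    linarith [key]
  · ext i k
    simp only [Matrix.sub_apply, Matrix.add_apply, Matrix.vecMulVec_apply, Matrix.mul_apply]
    have h1 : ∑ l, X i l * B l k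
        = (∑ l ∈ Finset.univ.erase j, X i l * B l k) + X i j * B j k :=
      (Finset.sum_erase_add _ _ (Finset.mem_univ j)).symm
    have h2 : ∑ l, X i l * B' l k
        = (∑ l ∈ Finset.univ.erase j, X i l * B l k) + X i j * B' j k := by
      rw [← Finset.sum_erase_add _ _ (Finset.mem_univ j)]
      congr 1
      exact Finset.sum_congr rfl fun l hl => by rw [hB'rows l (Finset.ne_of_mem_erase hl)]
    rw [h1, h2]; ring
end
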